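/- If W is a communication wheel of v with rim nodes v₁, ..., v_m, then the boundary circle ∂Z(v) is contained in the union of the disks Z(v₁) ∪ ... ∪ Z(v_m). -/

import Mathlib

open Metric

noncomputable section

/-- Points of the plane. -/
abbrev Pt := EuclideanSpace ℝ (Fin 2)

/-- `Zd r p` : the closed disk (communication zone) of radius `r` centered at `p`. -/
def Zd (r : ℝ) (p : Pt) : Set Pt := Metric.closedBall p r

/-- `Zb r p` : the boundary circle of the communication zone of `p`. -/
def Zb (r : ℝ) (p : Pt) : Set Pt := Metric.sphere p r

/-- The arc-containment relation `a ⪯_v b`. -/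
def arcLe (r : ℝ) (v a b : Pt) : Prop := Zd r a ∩ Zb r v ⊆ Zd r b ∩ Zb r v

/-- `u` is a neighbor of `v`. -/
def Nbr (r : ℝ) (v u : Pt) : Prop := u ≠ v ∧ dist u v ≤ r

/-- General position: no three distinct points of `V` are collinear. -/
def GenPos (V : Set Pt) : Prop :=
  ∀ a ∈ V, ∀ b ∈ V, ∀ c ∈ V, a ≠ b → a ≠ c → b ≠ c → ¬ Collinear ℝ ({a, b, c} : Set Pt)

/-- `u` is a maximal neighbor of `v` within `V`. -/
def MaxNbr (V : Set Pt) (r : ℝ) (v u : Pt) : Prop :=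
  u ∈ V ∧ Nbr r v u ∧ ∀ u' ∈ V, u' ≠ u → Nbr r v u' → ¬ arcLe r v u u'

/-- `v` is an interior node of `V`. -/
def IsInterior (V : Set Pt) (r : ℝ) (v : Pt) : Prop :=
  ∀ z ∈ Zb r v, ∃ v' ∈ V, v' ≠ v ∧ z ∈ Zd r v'

/-- Counterclockwise rotation by `π/2`. -/
def rot90 (x : Pt) : Pt := (WithLp.equiv 2 (Fin 2 → ℝ)).symm ![-(x 1), x 0]

/-- The boundary intersection `CCW(v, v')` of the circles `∂Z(v)` and `∂Z(v')`:
traversing from `CCW(v,v')` to `CW(v,v')` clockwise along `∂Z(v)` sweeps an angle `< π`. -/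
def ccwPt (r : ℝ) (v v' : Pt) : Pt :=
  midpoint ℝ v v' + (Real.sqrt (r ^ 2 - (dist v v' / 2) ^ 2) / dist v v') • rot90 (v' - v)

/-- The boundary intersection `CW(v, v')`. -/
def cwPt (r : ℝ) (v v' : Pt) : Pt :=
  midpoint ℝ v v' - (Real.sqrt (r ^ 2 - (dist v v' / 2) ^ 2) / dist v v') • rot90 (v' - v)

/-- A communication wheel of `v` with `m` rim nodes `w 0, …, w (m-1)` (indices mod `m`). -/
def IsCommWheel (V : Set Pt) (r : ℝ) (v : Pt) (m : ℕ) (w : ZMod m → Pt) : Prop :=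
  3 ≤ m ∧ Function.Injective w ∧
  (∀ i, MaxNbr V r v (w i)) ∧
  (∀ i, dist (w i) (w (i + 1)) ≤ r) ∧
  (∀ i, ccwPt r v (w i) ∈ Zd r (w (i + 1)) ∧ cwPt r v (w i) ∈ Zd r (w (i - 1)))

open Real

namespace S9
def toC (p : Pt) : ℂ := ⟨p 0, p 1⟩
def ofC (z : ℂ) : Pt := (WithLp.equiv 2 (Fin 2 → ℝ)).symm ![z.re, z.im]

@[simp] lemma ofC_zero : ofC z 0 = z.re := by simp [ofC]
@[simp] lemma ofC_one : ofC z 1 = z.im := by simp [ofC]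
@[simp] lemma toC_re (p : Pt) : (toC p).re = p 0 := rfl
@[simp] lemma toC_im (p : Pt) : (toC p).im = p 1 := rfl

lemma ofC_toC (p : Pt) : ofC (toC p) = p := by
  ext i; fin_cases i <;> simp

lemma toC_ofC (z : ℂ) : toC (ofC z) = z := by
  apply Complex.ext <;> simp

lemma toC_inj : Function.Injective toC := by
  intro a b h
  rw [← ofC_toC a, ← ofC_toC b, h]

lemma abs_toC_sub (p q : Pt) : ‖toC p - toC q‖ = dist p q := by
  rw [EuclideanSpace.dist_eq, Complex.norm_def, Complex.normSq_apply]
  simp [Fin.sum_univ_two, Real.dist_eq, sq_abs]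
  ring_nf

lemma toC_add (a b : Pt) : toC (a + b) = toC a + toC b := by
  apply Complex.ext <;> simp [PiLp.add_apply]

lemma toC_sub (a b : Pt) : toC (a - b) = toC a - toC b := by
  apply Complex.ext <;> simp [PiLp.sub_apply]

lemma toC_smul (c : ℝ) (a : Pt) : toC (c • a) = (c : ℂ) * toC a := by
  apply Complex.ext <;> simp [PiLp.smul_apply]

lemma toC_rot90 (x : Pt) : toC (rot90 x) = Complex.I * toC x := by
  apply Complex.ext <;> simp [rot90]

lemma toC_midpoint (a b : Pt) : toC (midpoint ℝ a b) = (toC a + toC b) / 2 := by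
  rw [midpoint_eq_smul_add, toC_smul, toC_add]
  rw [show ((⅟2 : ℝ)) = (2:ℝ)⁻¹ by norm_num]
  push_cast
  ring


def epts (r : ℝ) (v : Pt) (φ : ℝ) : Pt := ofC (toC v + r * Complex.exp (φ * Complex.I))

lemma exists_epts {r : ℝ} (hr : 0 < r) {v z : Pt} (hz : z ∈ Zb r v) : ∃ φ, z = epts r v φ := by
  refine ⟨(toC z - toC v).arg, ?_⟩
  have habs : ‖toC z - toC v‖ = r := by rw [abs_toC_sub]; exact hz
  have := Complex.norm_mul_exp_arg_mul_I (toC z - toC v)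
  rw [habs] at this
  rw [epts, this]
  rw [show toC v + (toC z - toC v) = toC z by ring, ofC_toC]

lemma dist_epts (r : ℝ) (v p : Pt) (φ : ℝ) :
    dist (epts r v φ) p = ‖(r : ℂ) * Complex.exp (φ * Complex.I) - (toC p - toC v)‖ := by
  rw [← abs_toC_sub, epts, toC_ofC]
  congr 1; ring

lemma mem_iff {r : ℝ} (hr : 0 < r) {v p : Pt} (hp : p ≠ v) (hpr : dist v p ≤ r) (φ : ℝ) :
    epts r v φ ∈ Zd r p ↔
      Real.cos (Real.arccos (dist v p / (2*r))) ≤ Real.cos (φ - (toC p - toC v).arg) := by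
  set d := dist v p with hdd
  have hd0 : 0 < d := dist_pos.mpr (Ne.symm hp)
  set α := (toC p - toC v).arg with hα
  have hD : (d : ℂ) * Complex.exp (α * Complex.I) = toC p - toC v := by
    have habs : ‖toC p - toC v‖ = d := by rw [abs_toC_sub, dist_comm]
    rw [← habs]; exact Complex.norm_mul_exp_arg_mul_I _
  have hq1 : (0:ℝ) ≤ d/(2*r) := by positivity
  have hq2 : d/(2*r) ≤ 1 := by rw [div_le_one (by positivity)]; linarith
  have harc : Real.cos (Real.arccos (d / (2*r))) = d / (2*r) :=
    Real.cos_arccos (by linarith) hq2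
  rw [harc]
  have hns : (‖(r : ℂ) * Complex.exp (φ * Complex.I) - (toC p - toC v)‖)^2
      = r^2 + d^2 - 2*r*d*Real.cos (φ - α) := by
    rw [← hD, Complex.sq_norm, Complex.normSq_apply]
    simp [Complex.mul_re, Complex.mul_im, Complex.exp_ofReal_mul_I_re, Complex.exp_ofReal_mul_I_im]
    rw [Real.cos_sub]
    linear_combination (r^2) * (Real.sin_sq_add_cos_sq φ) + (d^2) * (Real.sin_sq_add_cos_sq α)
  have hmem : epts r v φ ∈ Zd r p ↔ dist (epts r v φ) p ≤ r := Iff.rfl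
  rw [hmem, dist_epts]
  set A := ‖(r : ℂ) * Complex.exp (φ * Complex.I) - (toC p - toC v)‖ with hA
  have hA0 : 0 ≤ A := norm_nonneg _
  constructor
  · intro h
    have h2 : A^2 ≤ r^2 := by nlinarith
    rw [hns] at h2
    rw [div_le_iff₀ (by positivity)]
    nlinarith
  · intro h
    rw [div_le_iff₀ (by positivity)] at h
    have h2 : A^2 ≤ r^2 := by rw [hns]; nlinarith
    nlinarith

lemma ccw_eq {r : ℝ} (hr : 0 < r) {v p : Pt} (hp : p ≠ v) (hpr : dist v p ≤ r) :
    ccwPt r v p = epts r v ((toC p - toC v).arg + Real.arccos (dist v p / (2*r))) := by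
  apply toC_inj
  set d := dist v p with hdd
  have hd0 : 0 < d := dist_pos.mpr (Ne.symm hp)
  set α := (toC p - toC v).arg with hα
  set θ := Real.arccos (d / (2*r)) with hθ
  have hD : (d : ℂ) * Complex.exp (α * Complex.I) = toC p - toC v := by
    have habs : ‖toC p - toC v‖ = d := by rw [abs_toC_sub, dist_comm]
    rw [← habs]; exact Complex.norm_mul_exp_arg_mul_I _
  have hq1 : (0:ℝ) ≤ d/(2*r) := by positivity
  have hq2 : d/(2*r) ≤ 1 := by rw [div_le_one (by positivity)]; linarith
  have hcos : Real.cos θ = d / (2*r) := Real.cos_arccos (by linarith) hq2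
  set s := Real.sqrt (r^2 - (d/2)^2) with hs
  have hsin : r * Real.sin θ = s := by
    rw [hθ, Real.sin_arccos, hs]
    rw [show r * Real.sqrt (1 - (d/(2*r))^2) = Real.sqrt (r^2) * Real.sqrt (1 - (d/(2*r))^2) by
      rw [Real.sqrt_sq hr.le]]
    rw [← Real.sqrt_mul (sq_nonneg r)]
    congr 1
    field_simp
  have hrcos : r * Real.cos θ = d / 2 := by rw [hcos]; field_simp
  have hd0' : (d : ℂ) ≠ 0 := by exact_mod_cast hd0.ne'
  set E := Complex.exp ((α:ℂ) * Complex.I) with hE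
  have e1 : (r : ℂ) * ((Real.cos θ : ℝ) : ℂ) = (d : ℂ)/2 := by
    exact_mod_cast congrArg Complex.ofReal hrcos
  have e2 : (r : ℂ) * ((Real.sin θ : ℝ) : ℂ) = (s : ℂ) := by
    exact_mod_cast congrArg Complex.ofReal hsin
  have hRHS : (r:ℂ) * Complex.exp ((((α + θ) : ℝ) : ℂ) * Complex.I)
      = ((d:ℂ)/2 + (s:ℂ)*Complex.I) * E := by
    push_cast
    rw [show ((α:ℂ)+(θ:ℂ)) * Complex.I = (α:ℂ)*Complex.I + (θ:ℂ)*Complex.I by ring,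
        Complex.exp_add, ← hE, Complex.exp_mul_I,
        ← Complex.ofReal_cos, ← Complex.ofReal_sin]
    linear_combination E * e1 + E * Complex.I * e2
  have hP : toC p = toC v + (d:ℂ) * E := by rw [hE, hD]; ring
  rw [ccwPt, toC_add, toC_midpoint, toC_smul, toC_rot90, toC_sub, epts, toC_ofC, ← hdd,
      hRHS, hP]
  rw [← hs]
  field_simp
  push_cast; linear_combination (E * s * Complex.I * 2) * (mul_inv_cancel₀ hd0')


end S9

lemma cos_ge_iff {θ x : ℝ} (hθ0 : 0 < θ) (hθ : θ < π/2) (hx1 : -(2*π) < x) (hx2 : x < 2*π) :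
    Real.cos θ ≤ Real.cos x ↔ |x| ≤ θ ∨ 2*π - θ ≤ |x| := by
  have hπ := Real.pi_pos
  rw [← Real.cos_abs x]
  have hy0 : 0 ≤ |x| := abs_nonneg x
  have hy2 : |x| < 2*π := abs_lt.mpr ⟨hx1, hx2⟩
  rcases le_or_gt (|x|) π with h | h
  · have h1 : ¬ (2*π - θ ≤ |x|) := by intro hc; linarith
    simp only [h1, or_false]
    exact Real.strictAntiOn_cos.le_iff_ge ⟨hθ0.le, by linarith⟩ ⟨hy0, h⟩
  · have hcos : Real.cos (|x|) = Real.cos (2*π - |x|) := (Real.cos_two_pi_sub _).symm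
    have h1 : ¬ (|x| ≤ θ) := by intro hc; linarith
    simp only [h1, false_or]
    rw [hcos]
    rw [Real.strictAntiOn_cos.le_iff_ge ⟨hθ0.le, by linarith⟩ ⟨by linarith, by linarith⟩]
    constructor <;> intro <;> linarith


theorem stmt_9 (V : Set Pt) (hV : V.Finite) (hgp : GenPos V) (r : ℝ) (hr : 0 < r)
    (v : Pt) (m : ℕ) (w : ZMod m → Pt) (hw : IsCommWheel V r v m w) :
    Zb r v ⊆ ⋃ i, Zd r (w i) := by
  obtain ⟨hm, hinj, hmax, hadj, hccw⟩ := hw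
  intro z hz
  by_contra hcov
  simp only [Set.mem_iUnion, not_exists] at hcov
  haveI : NeZero m := ⟨by omega⟩
  haveI : Fact (1 < m) := ⟨by omega⟩
  obtain ⟨φ₀, rfl⟩ := S9.exists_epts hr hz
  have hπ := Real.pi_pos
  set d : ZMod m → ℝ := fun i => dist v (w i) with hd
  set α : ZMod m → ℝ := fun i => (S9.toC (w i) - S9.toC v).arg with hα
  set θ : ZMod m → ℝ := fun i => Real.arccos (d i / (2*r)) with hθdef
  have hne : ∀ i, w i ≠ v := fun i => (hmax i).2.1.1
  have hd0 : ∀ i, 0 < d i := fun i => dist_pos.mpr (Ne.symm (hne i))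
  have hdr : ∀ i, d i ≤ r := fun i => by
    show dist v (w i) ≤ r
    rw [dist_comm]; exact (hmax i).2.1.2
  have hθ0 : ∀ i, 0 < θ i := fun i => Real.arccos_pos.mpr (by
    rw [div_lt_one (by positivity)]; nlinarith [hd0 i, hdr i])
  have hθh : ∀ i, θ i < π/2 := fun i =>
    Real.arccos_lt_pi_div_two.mpr (div_pos (hd0 i) (by positivity))
  have hmem : ∀ (i : ZMod m) (φ : ℝ),
      S9.epts r v φ ∈ Zd r (w i) ↔ Real.cos (θ i) ≤ Real.cos (φ - α i) :=
    fun i φ => S9.mem_iff hr (hne i) (hdr i) φ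
  set β : ZMod m → ℝ := fun i => toIcoMod Real.two_pi_pos φ₀ (α i) with hβdef
  have hβIco : ∀ i, β i ∈ Set.Ico φ₀ (φ₀ + 2*π) := fun i => toIcoMod_mem_Ico _ _ _
  have hβk : ∀ i, ∃ k : ℤ, α i = β i + k * (2*π) := fun i =>
    ⟨toIcoDiv Real.two_pi_pos φ₀ (α i), by
      have h := self_sub_toIcoMod Real.two_pi_pos φ₀ (α i)
      rw [zsmul_eq_mul] at h
      have : β i = toIcoMod Real.two_pi_pos φ₀ (α i) := rfl
      linarith [this ▸ h]⟩
  have hcosβ : ∀ (i : ZMod m) (x : ℝ), Real.cos (x - α i) = Real.cos (x - β i) := by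
    intro i x
    obtain ⟨k, hk⟩ := hβk i
    rw [hk, show x - (β i + (k:ℝ)*(2*π)) = (x - β i) + (-k : ℤ) * (2*π) by push_cast; ring,
      Real.cos_add_int_mul_two_pi]
  have hcov' : ∀ i, Real.cos (φ₀ - β i) < Real.cos (θ i) := fun i => by
    rw [← hcosβ i φ₀]
    exact not_le.mp (fun h => hcov i ((hmem i φ₀).mpr h))
  have hβlo : ∀ i, φ₀ + θ i < β i ∧ β i < φ₀ + 2*π - θ i := by
    intro i
    have hc := hcov' i
    have hI := hβIco i
    have hx1 : -(2*π) < φ₀ - β i := by linarith [hI.2]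
    have hx0 : φ₀ - β i ≤ 0 := by linarith [hI.1]
    have hx2 : φ₀ - β i < 2*π := by linarith
    have habs : |φ₀ - β i| = β i - φ₀ := by rw [abs_of_nonpos hx0]; ring
    have hnot : ¬(|φ₀ - β i| ≤ θ i ∨ 2*π - θ i ≤ |φ₀ - β i|) := by
      intro hor
      exact absurd ((cos_ge_iff (hθ0 i) (hθh i) hx1 hx2).mpr hor) (not_le.mpr hc)
    push_neg at hnot
    rw [habs] at hnot
    exact ⟨by linarith [hnot.1], by linarith [hnot.2]⟩
  have char : ∀ (i : ZMod m) (φ : ℝ), φ₀ ≤ φ → φ < φ₀ + 2*π →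
      (S9.epts r v φ ∈ Zd r (w i) ↔ (β i - θ i ≤ φ ∧ φ ≤ β i + θ i)) := by
    intro i φ h1 h2
    rw [hmem i φ, hcosβ i φ]
    have hb := hβlo i
    have hx1 : -(2*π) < φ - β i := by linarith [hb.2, hθ0 i]
    have hx2 : φ - β i < 2*π := by linarith [hb.1, hθ0 i]
    rw [cos_ge_iff (hθ0 i) (hθh i) hx1 hx2]
    have hfar : ¬ (2*π - θ i ≤ |φ - β i|) := by
      rw [not_le]
      rw [abs_lt]
      constructor <;> [linarith [hb.1]; linarith [hb.2]]
    rw [or_iff_left hfar, abs_le]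
    constructor <;> (rintro ⟨a, b⟩; constructor <;> linarith)
  have hccwmem : ∀ i, S9.epts r v (α i + θ i) ∈ Zd r (w (i+1)) := fun i => by
    have h := (hccw i).1
    rwa [S9.ccw_eq hr (hne i) (hdr i)] at h
  have hchain : ∀ i, β (i+1) - θ (i+1) ≤ β i + θ i ∧ β i + θ i ≤ β (i+1) + θ (i+1) := by
    intro i
    have h1 : S9.epts r v (β i + θ i) ∈ Zd r (w (i+1)) := by
      rw [hmem]
      have h2 := (hmem (i+1) (α i + θ i)).mp (hccwmem i)
      obtain ⟨k, hk⟩ := hβk i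
      calc Real.cos (θ (i+1)) ≤ Real.cos (α i + θ i - α (i+1)) := h2
        _ = Real.cos (β i + θ i - α (i+1)) := by
            rw [hk, show β i + (k:ℝ)*(2*π) + θ i - α (i+1)
              = (β i + θ i - α (i+1)) + (k:ℤ) * (2*π) by push_cast; ring,
              Real.cos_add_int_mul_two_pi]
    have hb := hβlo i
    exact (char (i+1) (β i + θ i) (by linarith [hb.1, hθ0 i]) (by linarith [hb.2, hθh i])).mp h1
  obtain ⟨i₀, -, hi₀⟩ := Finset.exists_max_image Finset.univ (fun i => β i + θ i)
    ⟨0, Finset.mem_univ 0⟩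
  have hallk : ∀ k : ℕ, β (i₀ + (k : ZMod m)) + θ (i₀ + (k : ZMod m)) = β i₀ + θ i₀ := by
    intro k
    induction k with
    | zero => norm_num
    | succ n ih =>
      have h1 := (hchain (i₀ + (n : ZMod m))).2
      have h2 := hi₀ (i₀ + (n : ZMod m) + 1) (Finset.mem_univ _)
      rw [show (i₀ + ((n+1 : ℕ) : ZMod m)) = (i₀ + (n : ZMod m)) + 1 by push_cast; ring]
      linarith
  have hallR : ∀ j, β j + θ j = β i₀ + θ i₀ := by
    intro j
    have h := hallk (j - i₀).val
    rwa [show (((j - i₀).val : ℕ) : ZMod m) = j - i₀ by rw [ZMod.natCast_val, ZMod.cast_id],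
      show i₀ + (j - i₀) = j by ring] at h
  have key : ∀ i j : ZMod m, i ≠ j → θ i ≤ θ j → False := by
    intro i j hij hθle
    refine (hmax i).2.2 (w j) (hmax j).1 (fun he => hij (hinj he).symm) (hmax j).2.1 ?_
    rintro z' ⟨hz1, hz2⟩
    obtain ⟨φ, rfl⟩ := S9.exists_epts hr hz2
    set ψ := toIcoMod Real.two_pi_pos φ₀ φ with hψdef
    have hψk : ∃ k : ℤ, φ = ψ + k * (2*π) :=
      ⟨toIcoDiv Real.two_pi_pos φ₀ φ, by
        have h := self_sub_toIcoMod Real.two_pi_pos φ₀ φ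
        rw [zsmul_eq_mul] at h
        linarith⟩
    obtain ⟨k, hk⟩ := hψk
    have hψI := toIcoMod_mem_Ico Real.two_pi_pos φ₀ φ
    have hcosψ : ∀ γ : ℝ, Real.cos (φ - γ) = Real.cos (ψ - γ) := by
      intro γ
      rw [hk, show ψ + (k:ℝ)*(2*π) - γ = (ψ - γ) + (k:ℤ)*(2*π) by push_cast; ring,
        Real.cos_add_int_mul_two_pi]
    have h1 : S9.epts r v ψ ∈ Zd r (w i) := by
      rw [hmem, ← hcosψ]
      exact (hmem i φ).mp hz1
    have h2 := (char i ψ hψI.1 hψI.2).mp h1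
    have hRi := hallR i
    have hRj := hallR j
    have h4 : S9.epts r v ψ ∈ Zd r (w j) :=
      (char j ψ hψI.1 hψI.2).mpr ⟨by linarith [h2.1], by linarith [h2.2]⟩
    have h5 : S9.epts r v φ ∈ Zd r (w j) := by
      rw [hmem, hcosψ]
      exact (hmem j ψ).mp h4
    exact ⟨h5, hz2⟩
  rcases le_total (θ 0) (θ 1) with h | h
  · exact key 0 1 zero_ne_one h
  · exact key 1 0 one_ne_zero h
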